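/- For all a, b > 0 with a ≠ b, A/e < (π/(2e))·P < X < P, where A = (a+b)/2, P = (a-b)/(2·arcsin((a-b)/(a+b))), G = √(ab), and X = A·e^{G/P-1}. -/

import Mathlib

open Real Filter Set Topology

noncomputable def Hfun (y : ℝ) : ℝ := y * Real.cos y / Real.sin y - Real.log (Real.sin y) + Real.log y

lemma Hderiv {x : ℝ} (hx : 0 < x) (hxp : x < π) :
    HasDerivAt Hfun (1/x - x/(sin x)^2) x := by
  have hs : sin x ≠ 0 := ne_of_gt (sin_pos_of_pos_of_lt_pi hx hxp)
  have h1 : HasDerivAt (fun y => y * cos y) (1 * cos x + x * (-sin x)) x :=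
    (hasDerivAt_id x).mul (hasDerivAt_cos x)
  have h2 := h1.div (hasDerivAt_sin x) hs
  have h3 := (hasDerivAt_sin x).log hs
  have h4 := hasDerivAt_log (ne_of_gt hx)
  have h5 := (h2.sub h3).add h4
  refine h5.congr_deriv ?_
  symm
  have := sin_sq_add_cos_sq x
  field_simp
  linear_combination (x^2) * this

lemma Hanti : StrictAntiOn Hfun (Set.Ioc 0 (π/2)) := by
  have hpi := pi_pos
  apply strictAntiOn_of_deriv_neg (convex_Ioc _ _)
  · intro x hx
    exact ((Hderiv hx.1 (lt_of_le_of_lt hx.2 (by linarith))).continuousAt).continuousWithinAt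
  · intro x hx
    rw [interior_Ioc] at hx
    have hxp : x < π := by have := hx.2; linarith
    rw [(Hderiv hx.1 hxp).deriv]
    have hs : 0 < sin x := sin_pos_of_pos_of_lt_pi hx.1 hxp
    have hsx : sin x < x := sin_lt hx.1
    rw [sub_neg, div_lt_div_iff₀ hx.1 (by positivity)]
    nlinarith

lemma Hlim : Tendsto Hfun (𝓝[>] (0:ℝ)) (𝓝 1) := by
  have hslope : Tendsto (fun x : ℝ => sin x / x) (𝓝[>] (0:ℝ)) (𝓝 1) := by
    have h := (hasDerivAt_sin 0).tendsto_slope_zero_right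
    simp only [Real.cos_zero, zero_add, sub_zero, smul_eq_mul] at h
    refine h.congr (fun x => ?_)
    rw [Real.sin_zero, sub_zero, div_eq_inv_mul]
  have hinv : Tendsto (fun x : ℝ => x / sin x) (𝓝[>] (0:ℝ)) (𝓝 1) := by
    have := hslope.inv₀ one_ne_zero
    simp only [inv_one] at this
    refine this.congr (fun x => ?_)
    rw [inv_div]
  have hcos : Tendsto (fun x : ℝ => cos x) (𝓝[>] (0:ℝ)) (𝓝 1) := by
    have h := (Real.continuous_cos.tendsto 0).mono_left (nhdsWithin_le_nhds (s := Set.Ioi 0))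
    simpa using h
  have hlog : Tendsto (fun x : ℝ => Real.log (sin x / x)) (𝓝[>] (0:ℝ)) (𝓝 0) := by
    have := (Real.continuousAt_log one_ne_zero).tendsto.comp hslope
    simpa [Function.comp_def] using this
  have hmain : Tendsto (fun x : ℝ => x / sin x * cos x - Real.log (sin x / x)) (𝓝[>] (0:ℝ)) (𝓝 1) := by
    have := (hinv.mul hcos).sub hlog
    simpa using this
  refine hmain.congr' ?_
  filter_upwards [Ioo_mem_nhdsGT_of_mem (by constructor <;> [rfl; exact pi_pos] : (0:ℝ) ∈ Ico 0 π)] with x hx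
  have hs : 0 < sin x := sin_pos_of_pos_of_lt_pi hx.1 hx.2
  unfold Hfun
  rw [Real.log_div (ne_of_gt hs) (ne_of_gt hx.1)]
  ring

lemma Hle1 {x : ℝ} (hx : 0 < x) (hx2 : x ≤ π/2) : Hfun x ≤ 1 := by
  have key : ∀ᶠ y in 𝓝[>] (0:ℝ), Hfun x ≤ Hfun y := by
    filter_upwards [Ioo_mem_nhdsGT_of_mem (by constructor <;> [rfl; exact hx] : (0:ℝ) ∈ Ico 0 x)] with y hy
    exact le_of_lt (Hanti ⟨hy.1, le_trans (le_of_lt hy.2) hx2⟩ ⟨hx, hx2⟩ hy.2)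
  exact ge_of_tendsto Hlim key

lemma Hkey {x : ℝ} (hx : 0 < x) (hx2 : x < π/2) :
    Real.log (π/2) < Hfun x ∧ Hfun x < 1 := by
  have hpi := pi_pos
  constructor
  · have := Hanti ⟨hx, le_of_lt hx2⟩ ⟨by linarith, le_refl _⟩ hx2
    have hH : Hfun (π/2) = Real.log (π/2) := by
      unfold Hfun
      rw [Real.cos_pi_div_two, Real.sin_pi_div_two, Real.log_one]
      ring
    linarith [this, hH ▸ this]
  · have h1 : Hfun x < Hfun (x/2) := Hanti ⟨by linarith, by linarith⟩ ⟨hx, le_of_lt hx2⟩ (by linarith)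
    have h2 : Hfun (x/2) ≤ 1 := Hle1 (by linarith) (by linarith)
    linarith

lemma sandor_aux (a b : ℝ) (ha : 0 < a) (hb : 0 < b) (hba : b < a) :
    ((a + b) / 2) / exp 1 < (π / (2 * exp 1)) * ((a - b) / (2 * arcsin ((a - b) / (a + b)))) ∧
    (π / (2 * exp 1)) * ((a - b) / (2 * arcsin ((a - b) / (a + b)))) <
      ((a + b) / 2) *
        exp (Real.sqrt (a * b) / ((a - b) / (2 * arcsin ((a - b) / (a + b)))) - 1) ∧
    ((a + b) / 2) *
        exp (Real.sqrt (a * b) / ((a - b) / (2 * arcsin ((a - b) / (a + b)))) - 1) <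
      (a - b) / (2 * arcsin ((a - b) / (a + b))) := by
  have hab2 : 0 < a + b := by linarith
  set s : ℝ := (a - b) / (a + b) with hsdef
  have hs0 : 0 < s := div_pos (by linarith) hab2
  have hs1 : s < 1 := (div_lt_one hab2).2 (by linarith)
  set x : ℝ := arcsin s with hxdef
  have hx0 : 0 < x := Real.arcsin_pos.2 hs0
  have hx2 : x < π / 2 := Real.arcsin_lt_pi_div_two.2 hs1
  have hpi := pi_pos
  have hsin : sin x = s := Real.sin_arcsin (by linarith) (le_of_lt hs1)
  have hsinpos : 0 < sin x := by rw [hsin]; exact hs0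
  have hcospos : 0 < cos x := Real.cos_pos_of_mem_Ioo ⟨by linarith, hx2⟩
  have hE : (0:ℝ) < exp 1 := exp_pos 1
  have hA : (0:ℝ) < (a + b) / 2 := by linarith
  have hPa : (a - b) / (2 * x) = (a + b) / 2 * (sin x / x) := by
    rw [hsin, hsdef]
    field_simp
  have hGa : Real.sqrt (a * b) = (a + b) / 2 * cos x := by
    have hcos : cos x = Real.sqrt (1 - s ^ 2) := Real.cos_arcsin s
    have h1 : a * b = ((a + b) / 2 * cos x) ^ 2 := by
      rw [mul_pow, hcos, Real.sq_sqrt (by nlinarith)]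
      rw [hsdef]
      field_simp
      ring
    rw [h1, Real.sqrt_sq (by positivity)]
  have hGPa : Real.sqrt (a * b) / ((a - b) / (2 * x)) = x * cos x / sin x := by
    rw [hGa, hPa]
    rw [div_eq_div_iff (by positivity) (ne_of_gt hsinpos)]
    field_simp
  have hk := Hkey hx0 hx2
  have hHval : Hfun x = x * cos x / sin x - Real.log (sin x / x) := by
    unfold Hfun
    rw [Real.log_div (ne_of_gt hsinpos) (ne_of_gt hx0)]
    ring
  rw [hHval] at hk
  have hSpos : 0 < sin x / x := by positivity
  refine ⟨?_, ?_, ?_⟩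
  · -- first inequality via Jordan
    have hJ : 2 / π * x < sin x := Real.mul_lt_sin hx0 hx2
    have h2x : 2 * x < π * sin x := by
      rw [div_mul_eq_mul_div] at hJ
      have := (div_lt_iff₀ hpi).1 hJ
      linarith
    have hone : 1 < π * sin x / (2 * x) := (one_lt_div (by positivity)).2 (by linarith)
    calc ((a + b) / 2) / exp 1 = ((a + b) / 2) / exp 1 * 1 := (mul_one _).symm
      _ < ((a + b) / 2) / exp 1 * (π * sin x / (2 * x)) :=
          mul_lt_mul_of_pos_left hone (by positivity)
      _ = (π / (2 * exp 1)) * ((a - b) / (2 * x)) := by rw [hPa]; ring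
  · rw [hGPa, hPa]
    have h1 : Real.log (π / 2) + Real.log (sin x / x) < x * cos x / sin x := by linarith [hk.1]
    have h2 : π / 2 * (sin x / x) < exp (x * cos x / sin x) := by
      have := exp_lt_exp.2 h1
      rwa [Real.exp_add, Real.exp_log (by positivity), Real.exp_log hSpos] at this
    calc (π / (2 * exp 1)) * ((a + b) / 2 * (sin x / x))
        = ((a + b) / 2 / exp 1) * (π / 2 * (sin x / x)) := by ring
      _ < ((a + b) / 2 / exp 1) * exp (x * cos x / sin x) :=
          mul_lt_mul_of_pos_left h2 (by positivity)
      _ = ((a + b) / 2) * exp (x * cos x / sin x - 1) := by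
          rw [Real.exp_sub]; ring
  · rw [hGPa, hPa]
    have h1 : x * cos x / sin x - 1 < Real.log (sin x / x) := by linarith [hk.2]
    have h2 : exp (x * cos x / sin x - 1) < sin x / x := by
      have := exp_lt_exp.2 h1
      rwa [Real.exp_log hSpos] at this
    exact mul_lt_mul_of_pos_left h2 hA

theorem sandor_coro89 (a b : ℝ) (ha : 0 < a) (hb : 0 < b) (hab : a ≠ b) :
    ((a + b) / 2) / exp 1 < (π / (2 * exp 1)) * ((a - b) / (2 * arcsin ((a - b) / (a + b)))) ∧
    (π / (2 * exp 1)) * ((a - b) / (2 * arcsin ((a - b) / (a + b)))) <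
      ((a + b) / 2) *
        exp (Real.sqrt (a * b) / ((a - b) / (2 * arcsin ((a - b) / (a + b)))) - 1) ∧
    ((a + b) / 2) *
        exp (Real.sqrt (a * b) / ((a - b) / (2 * arcsin ((a - b) / (a + b)))) - 1) <
      (a - b) / (2 * arcsin ((a - b) / (a + b))) := by
  rcases hab.lt_or_gt with h | h
  · have e1 : (a - b) / (a + b) = -((b - a) / (b + a)) := by ring
    have h2 : (a - b) / (2 * arcsin ((a - b) / (a + b)))
        = (b - a) / (2 * arcsin ((b - a) / (b + a))) := by
      rw [e1, Real.arcsin_neg]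
      ring
    rw [h2, show a + b = b + a from by ring, show a * b = b * a from by ring]
    exact sandor_aux b a hb ha h
  · exact sandor_aux a b ha hb h
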